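/- Let n ≥ 3 and let v1, …, vn be unit vectors in ℝ³. Define r_{ij} = (1 + v_i·v_j)/2 and S_n = Σ_{i=1}^{n−1} r_{i,i+1} − r_{1n}. Then S_n ≤ n cos²(π/(2n)) − 1. -/

import Mathlib

open scoped RealInnerProductSpace
open Real Finset

lemma inner_key {E : Type*} [NormedAddCommGroup E] [InnerProductSpace ℝ E]
    {u v w : E} (hu : ‖u‖ = 1) (hv : ‖v‖ = 1) (hw : ‖w‖ = 1) :
    ⟪u, v⟫ * ⟪v, w⟫ - Real.sqrt (1 - ⟪u, v⟫ ^ 2) * Real.sqrt (1 - ⟪v, w⟫ ^ 2) ≤ ⟪u, w⟫ := by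
  have hvv : ⟪v, v⟫ = 1 := by rw [real_inner_self_eq_norm_sq, hv]; norm_num
  have huu : ⟪u, u⟫ = 1 := by rw [real_inner_self_eq_norm_sq, hu]; norm_num
  have hww : ⟪w, w⟫ = 1 := by rw [real_inner_self_eq_norm_sq, hw]; norm_num
  set a := u - ⟪u, v⟫ • v with ha
  set b := w - ⟪v, w⟫ • v with hb
  have hab : ⟪a, b⟫ = ⟪u, w⟫ - ⟪u, v⟫ * ⟪v, w⟫ := by
    simp only [ha, hb, inner_sub_left, inner_sub_right, real_inner_smul_left,
      real_inner_smul_right, hvv, real_inner_comm v u, real_inner_comm w v]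
    ring
  have haa : ⟪a, a⟫ = 1 - ⟪u, v⟫ ^ 2 := by
    simp only [ha, inner_sub_left, inner_sub_right, real_inner_smul_left,
      real_inner_smul_right, hvv, huu, real_inner_comm v u]
    ring
  have hbb : ⟪b, b⟫ = 1 - ⟪v, w⟫ ^ 2 := by
    simp only [hb, inner_sub_left, inner_sub_right, real_inner_smul_left,
      real_inner_smul_right, hvv, hww, real_inner_comm w v]
    ring
  have hna : ‖a‖ = Real.sqrt (1 - ⟪u, v⟫ ^ 2) := by rw [← haa, norm_eq_sqrt_real_inner]
  have hnb : ‖b‖ = Real.sqrt (1 - ⟪v, w⟫ ^ 2) := by rw [← hbb, norm_eq_sqrt_real_inner]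
  have h := abs_real_inner_le_norm a b
  rw [hna, hnb, hab] at h
  have h2 := (abs_le.1 h).1
  linarith

lemma arccos_inner_triangle {E : Type*} [NormedAddCommGroup E] [InnerProductSpace ℝ E]
    {u v w : E} (hu : ‖u‖ = 1) (hv : ‖v‖ = 1) (hw : ‖w‖ = 1) :
    arccos ⟪u, w⟫ ≤ arccos ⟪u, v⟫ + arccos ⟪v, w⟫ := by
  have hp1 : |⟪u, v⟫| ≤ 1 := by simpa [hu, hv] using abs_real_inner_le_norm u v
  have hq1 : |⟪v, w⟫| ≤ 1 := by simpa [hv, hw] using abs_real_inner_le_norm v w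
  have hr1 : |⟪u, w⟫| ≤ 1 := by simpa [hu, hw] using abs_real_inner_le_norm u w
  obtain ⟨hp1l, hp1r⟩ := abs_le.1 hp1
  obtain ⟨hq1l, hq1r⟩ := abs_le.1 hq1
  obtain ⟨hr1l, hr1r⟩ := abs_le.1 hr1
  have hkey := inner_key hu hv hw
  by_cases hle : arccos ⟪u, v⟫ + arccos ⟪v, w⟫ ≤ π
  · have hcos : cos (arccos ⟪u, v⟫ + arccos ⟪v, w⟫) ≤ cos (arccos ⟪u, w⟫) := by
      rw [Real.cos_arccos hr1l hr1r, Real.cos_add, Real.cos_arccos hp1l hp1r,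
        Real.cos_arccos hq1l hq1r, Real.sin_arccos, Real.sin_arccos]
      exact hkey
    by_contra hcon
    push_neg at hcon
    have := Real.strictAntiOn_cos
      ⟨add_nonneg (Real.arccos_nonneg _) (Real.arccos_nonneg _), hle⟩
      ⟨Real.arccos_nonneg _, Real.arccos_le_pi _⟩ hcon
    linarith
  · linarith [Real.arccos_le_pi ⟪u, w⟫]

lemma jensen_cos (s : Finset ℕ) (hs : s.Nonempty) (x : ℕ → ℝ)
    (h0 : ∀ i ∈ s, 0 ≤ x i) (h2 : ∀ i ∈ s, x i ≤ π / 2) :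
    ∑ i ∈ s, cos (x i) ≤ s.card * cos ((∑ i ∈ s, x i) / s.card) := by
  have hc : (0 : ℝ) < s.card := by
    exact_mod_cast Finset.card_pos.2 hs
  have hmem : ∀ i ∈ s, x i ∈ Set.Icc (-(π / 2)) (π / 2) := fun i hi =>
    ⟨le_trans (by linarith [pi_pos]) (h0 i hi), h2 i hi⟩
  have hjen := strictConcaveOn_cos_Icc.concaveOn.le_map_sum
    (t := s) (w := fun _ => ((s.card : ℝ))⁻¹) (p := x)
    (fun i _ => by positivity)
    (by simp [Finset.sum_const]; field_simp)
    hmem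
  simp only [smul_eq_mul, ← Finset.mul_sum] at hjen
  have h1 : (s.card : ℝ)⁻¹ * ∑ i ∈ s, cos (x i) ≤ cos ((∑ i ∈ s, x i) / s.card) := by
    rw [div_eq_inv_mul]
    exact hjen
  calc ∑ i ∈ s, cos (x i) = s.card * ((s.card : ℝ)⁻¹ * ∑ i ∈ s, cos (x i)) := by
        field_simp
    _ ≤ s.card * cos ((∑ i ∈ s, x i) / s.card) := by
        exact mul_le_mul_of_nonneg_left h1 (le_of_lt hc)

lemma h_mono {m : ℝ} (hm : 1 ≤ m) :
    MonotoneOn (fun t : ℝ => m * cos (t / m) - cos t) (Set.Icc 0 (π / 2)) := by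
  have hm0 : (0 : ℝ) < m := lt_of_lt_of_le one_pos hm
  apply monotoneOn_of_deriv_nonneg (convex_Icc _ _)
  · fun_prop
  · apply Differentiable.differentiableOn
    fun_prop
  · intro t ht
    rw [interior_Icc, Set.mem_Ioo] at ht
    have hD : HasDerivAt (fun t : ℝ => m * cos (t / m) - cos t)
        (m * (-sin (t / m) * (1 / m)) - -sin t) t := by
      exact (((Real.hasDerivAt_cos (t / m)).comp t
        ((hasDerivAt_id t).div_const m)).const_mul m).sub (Real.hasDerivAt_cos t)
    rw [hD.deriv]
    have hsin : sin (t / m) ≤ sin t := by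
      apply Real.sin_le_sin_of_le_of_le_pi_div_two
      · linarith [div_nonneg ht.1.le hm0.le, pi_pos]
      · exact ht.2.le
      · exact div_le_self ht.1.le hm
    have : m * (-sin (t / m) * (1 / m)) = -sin (t / m) := by field_simp
    rw [this]
    linarith

lemma N1real (m : ℝ) (hm3 : 3 ≤ m) :
    m * cos (π / (2 * m)) ≤ (m + 1) * cos (π / (m + 1)) := by
  have hm0 : (0 : ℝ) < m := by linarith
  have hπu : π < 3.15 := pi_lt_d2
  have hπl : 3.14 < π := pi_gt_d2
  have hπ0 : 0 < π := pi_pos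
  have hp2 : π ^ 2 < 9.9225 := by nlinarith
  have hp4 : π ^ 4 < 98.46 := by nlinarith [hp2, sq_nonneg π]
  have hm27 : (27 : ℝ) ≤ m ^ 3 := by
    nlinarith [mul_nonneg (mul_nonneg (by linarith : (0:ℝ) ≤ m - 3) hm0.le) hm0.le,
      mul_nonneg (by linarith : (0:ℝ) ≤ m - 3) (by linarith : (0:ℝ) ≤ m + 3)]
  have ha0 : 0 < π / (2 * m) := by positivity
  have ha1 : |π / (2 * m)| ≤ 1 := by
    rw [abs_of_pos ha0, div_le_one (by linarith)]
    linarith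
  have hca : cos (π / (2 * m)) ≤ 1 - (π / (2 * m)) ^ 2 / 2 + (π / (2 * m)) ^ 4 * (5 / 96) := by
    have hcb := Real.cos_bound ha1
    rw [abs_of_pos ha0] at hcb
    linarith [(abs_le.1 hcb).2]
  have hcb2 : 1 - (π / (m + 1)) ^ 2 / 2 ≤ cos (π / (m + 1)) := Real.one_sub_sq_div_two_le_cos
  have expand1 : m * (1 - (π / (2 * m)) ^ 2 / 2 + (π / (2 * m)) ^ 4 * (5 / 96)) =
      m - π ^ 2 / (8 * m) + π ^ 4 * 5 / (1536 * m ^ 3) := by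
    field_simp
    ring
  have expand2 : (m + 1) * (1 - (π / (m + 1)) ^ 2 / 2) = (m + 1) - π ^ 2 / (2 * (m + 1)) := by
    field_simp
  have e3 : π ^ 2 / (2 * (m + 1)) - π ^ 2 / (8 * m) = π ^ 2 * (3 * m - 1) / (8 * m * (m + 1)) := by
    field_simp
    ring
  have b1 : π ^ 2 * (3 * m - 1) / (8 * m * (m + 1)) ≤ 0.94 := by
    rw [div_le_iff₀ (by positivity)]
    nlinarith [mul_le_mul_of_nonneg_right hp2.le (by linarith : (0:ℝ) ≤ 3 * m - 1),
      sq_nonneg (m - 3)]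
  have b2 : π ^ 4 * 5 / (1536 * m ^ 3) ≤ 0.06 := by
    rw [div_le_iff₀ (by positivity)]
    nlinarith [hp4, hm27]
  calc m * cos (π / (2 * m))
      ≤ m * (1 - (π / (2 * m)) ^ 2 / 2 + (π / (2 * m)) ^ 4 * (5 / 96)) :=
        mul_le_mul_of_nonneg_left hca hm0.le
    _ ≤ (m + 1) * (1 - (π / (m + 1)) ^ 2 / 2) := by
        rw [expand1, expand2]
        linarith
    _ ≤ (m + 1) * cos (π / (m + 1)) := mul_le_mul_of_nonneg_left hcb2 (by linarith)

lemma N1 (k : ℕ) (hk : 3 ≤ k) :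
    ((k : ℝ) - 1) * cos (π / (2 * ((k : ℝ) - 1))) ≤ k * cos (π / k) := by
  rcases eq_or_lt_of_le hk with h3 | h4
  · subst h3
    norm_num
    nlinarith [Real.sq_sqrt (by norm_num : (0:ℝ) ≤ 2), Real.sqrt_nonneg 2]
  · have hm3 : (3 : ℝ) ≤ (k : ℝ) - 1 := by
      have : (4 : ℝ) ≤ (k : ℝ) := by exact_mod_cast h4
      linarith
    have := N1real ((k : ℝ) - 1) hm3
    simpa using this

lemma sum_cos_le (k : ℕ) (hk : 3 ≤ k) (s : Finset ℕ) (hcard : s.card = k)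
    (x : ℕ → ℝ) (hx0 : ∀ i ∈ s, 0 ≤ x i) (hxπ : ∀ i ∈ s, x i ≤ π)
    (hsum : ∑ i ∈ s, x i = π) :
    ∑ i ∈ s, cos (x i) ≤ k * cos (π / k) := by
  have hk0 : (0 : ℝ) < k := by positivity
  have hπ0 : 0 < π := pi_pos
  by_cases hbig : ∃ m ∈ s, π / 2 < x m
  · obtain ⟨m, hms, hbm⟩ := hbig
    set s' := s.erase m with hs'
    have hcard' : s'.card = k - 1 := by rw [hs', Finset.card_erase_of_mem hms, hcard]
    have hk1 : 1 ≤ k := by omega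
    have hcardR : ((s'.card : ℝ)) = (k : ℝ) - 1 := by
      rw [hcard']
      push_cast [Nat.cast_sub hk1]
      ring
    have hsum' : ∑ i ∈ s', x i = π - x m := by
      have h := Finset.sum_erase_add s x hms
      rw [hsum, ← hs'] at h
      linarith
    have hσ0 : 0 ≤ ∑ i ∈ s', x i := Finset.sum_nonneg fun i hi => hx0 i (Finset.mem_of_mem_erase hi)
    have hσhalf : ∑ i ∈ s', x i ≤ π / 2 := by
      rw [hsum']
      linarith
    have hxhalf : ∀ i ∈ s', x i ≤ π / 2 := by
      intro i hi
      calc x i ≤ ∑ j ∈ s', x j :=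
            Finset.single_le_sum (fun j hj => hx0 j (Finset.mem_of_mem_erase hj)) hi
        _ ≤ π / 2 := hσhalf
    have hs'ne : s'.Nonempty := by
      rw [← Finset.card_pos, hcard']
      omega
    set σ := ∑ i ∈ s', x i with hσ
    have hjen := jensen_cos s' hs'ne x (fun i hi => hx0 i (Finset.mem_of_mem_erase hi)) hxhalf
    rw [hcardR, ← hσ] at hjen
    -- cos (x m) = - cos σ
    have hxm : x m = π - σ := by linarith [hsum']
    have hcosm : cos (x m) = - cos σ := by rw [hxm, Real.cos_pi_sub]
    have hsplit : ∑ i ∈ s, cos (x i) = (∑ i ∈ s', cos (x i)) + cos (x m) :=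
      (Finset.sum_erase_add s _ hms).symm
    have hmono := h_mono (m := (k : ℝ) - 1) (by
        have : (3 : ℝ) ≤ (k : ℝ) := by exact_mod_cast hk
        linarith)
    have hHσ : ((k:ℝ) - 1) * cos (σ / ((k:ℝ) - 1)) - cos σ ≤
        ((k:ℝ) - 1) * cos ((π/2) / ((k:ℝ) - 1)) - cos (π/2) := by
      have := hmono (Set.mem_Icc.2 ⟨hσ0, hσhalf⟩) (Set.mem_Icc.2 ⟨by linarith, le_refl _⟩) hσhalf
      simpa using this
    have hdiv : (π / 2) / ((k:ℝ) - 1) = π / (2 * ((k:ℝ) - 1)) := by rw [div_div]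
    rw [Real.cos_pi_div_two, hdiv, sub_zero] at hHσ
    calc ∑ i ∈ s, cos (x i) = (∑ i ∈ s', cos (x i)) + cos (x m) := hsplit
      _ ≤ ((k:ℝ) - 1) * cos (σ / ((k:ℝ) - 1)) - cos σ := by
          rw [hcosm]; linarith [hjen]
      _ ≤ ((k:ℝ) - 1) * cos (π / (2 * ((k:ℝ) - 1))) := hHσ
      _ ≤ k * cos (π / k) := N1 k hk
  · push_neg at hbig
    have hs_ne : s.Nonempty := by
      rw [← Finset.card_pos, hcard]; omega
    have hjen := jensen_cos s hs_ne x hx0 hbig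
    rw [hsum, hcard] at hjen
    exact hjen

theorem bloch_cycle_bound
    (n : ℕ) (hn : 3 ≤ n) (v : ℕ → EuclideanSpace ℝ (Fin 3))
    (hv : ∀ i, 1 ≤ i → i ≤ n → ‖v i‖ = 1) :
    (∑ i ∈ Finset.Icc 1 (n - 1), (1 + ⟪v i, v (i + 1)⟫) / 2) - (1 + ⟪v 1, v n⟫) / 2 ≤
      n * cos (π / (2 * n)) ^ 2 - 1 := by
  have hπ0 : (0:ℝ) < π := pi_pos
  set θ : ℕ → ℝ := fun i => arccos ⟪v i, v (i + 1)⟫ with hθ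
  -- chain inequality
  have chain : ∀ j, 2 ≤ j → j ≤ n → arccos ⟪v 1, v j⟫ ≤ ∑ i ∈ Icc 1 (j - 1), θ i := by
    intro j hj
    induction j, hj using Nat.le_induction with
    | base =>
      intro _
      simp [hθ]
    | succ j hj ih =>
      intro hjn
      have hjn' : j ≤ n := by omega
      have hsplit : ∑ i ∈ Icc 1 (j + 1 - 1), θ i = (∑ i ∈ Icc 1 (j - 1), θ i) + θ j := by
        have h1 : j + 1 - 1 = (j - 1) + 1 := by omega
        have h2 : j - 1 + 1 = j := by omega
        rw [h1, Finset.sum_Icc_succ_top (by omega : 1 ≤ (j - 1) + 1), h2]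
      rw [hsplit]
      have htri : arccos ⟪v 1, v (j + 1)⟫ ≤ arccos ⟪v 1, v j⟫ + arccos ⟪v j, v (j + 1)⟫ :=
        arccos_inner_triangle (hv 1 le_rfl (by omega)) (hv j (by omega) hjn')
          (hv (j + 1) (by omega) hjn)
      have := ih hjn'
      simp only [hθ] at *
      linarith
  -- basic facts
  have hinner : ∀ i j, 1 ≤ i → i ≤ n → 1 ≤ j → j ≤ n → |⟪v i, v j⟫| ≤ 1 := by
    intro i j h1 h2 h3 h4
    simpa [hv i h1 h2, hv j h3 h4] using abs_real_inner_le_norm (v i) (v j)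
  have hmemIcc : ∀ i ∈ Icc 1 (n - 1), 1 ≤ i ∧ i ≤ n ∧ 1 ≤ i + 1 ∧ i + 1 ≤ n := by
    intro i hi
    rw [Finset.mem_Icc] at hi
    omega
  have hθ0 : ∀ i, 0 ≤ θ i := fun i => Real.arccos_nonneg _
  have hθπ : ∀ i, θ i ≤ π := fun i => Real.arccos_le_pi _
  have hcosθ : ∀ i ∈ Icc 1 (n - 1), cos (θ i) = ⟪v i, v (i + 1)⟫ := by
    intro i hi
    obtain ⟨h1, h2, h3, h4⟩ := hmemIcc i hi
    have := hinner i (i + 1) h1 h2 h3 h4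
    exact Real.cos_arccos (abs_le.1 this).1 (abs_le.1 this).2
  set S : ℝ := ∑ i ∈ Icc 1 (n - 1), θ i with hS
  set T : ℝ := min S π with hT
  have hS0 : 0 ≤ S := Finset.sum_nonneg fun i _ => hθ0 i
  have hT0 : 0 ≤ T := le_min hS0 hπ0.le
  have hTπ : T ≤ π := min_le_right _ _
  have hTS : T ≤ S := min_le_left _ _
  -- cos T ≤ ⟪v 1, v n⟫
  have hφle : arccos ⟪v 1, v n⟫ ≤ T := by
    apply le_min (chain n (by omega) le_rfl) (Real.arccos_le_pi _)
  have hcosT : cos T ≤ ⟪v 1, v n⟫ := by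
    have h1 := hinner 1 n le_rfl (by omega) (by omega) le_rfl
    have := Real.cos_le_cos_of_nonneg_of_le_pi (Real.arccos_nonneg ⟪v 1, v n⟫) hTπ hφle
    rwa [Real.cos_arccos (abs_le.1 h1).1 (abs_le.1 h1).2] at this
  -- scaling and Claim A
  set X : ℕ → ℝ := fun i => if i = 0 then π - T else θ i * (T / S) with hX
  have h0notin : (0 : ℕ) ∉ Icc 1 (n - 1) := by simp
  set s₀ : Finset ℕ := insert 0 (Icc 1 (n - 1)) with hs₀
  have hcard : s₀.card = n := by
    rw [hs₀, Finset.card_insert_of_notMem h0notin, Nat.card_Icc]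
    omega
  have hratio0 : 0 ≤ T / S := div_nonneg hT0 hS0
  have hratio1 : T / S ≤ 1 := div_le_one_of_le₀ hTS hS0
  have hXsum : ∑ i ∈ s₀, X i = π := by
    rw [hs₀, Finset.sum_insert h0notin]
    have h1 : ∀ i ∈ Icc 1 (n - 1), X i = θ i * (T / S) := by
      intro i hi
      obtain ⟨hi1, _⟩ := hmemIcc i hi
      simp [hX, Nat.one_le_iff_ne_zero.1 hi1]
    rw [Finset.sum_congr rfl h1, ← Finset.sum_mul, ← hS]
    have h2 : S * (T / S) = T := by
      rcases eq_or_lt_of_le hS0 with h | h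
      · have hT0' : T = 0 := le_antisymm (by rw [← h] at hTS; exact hTS) hT0
        rw [← h, hT0']
        simp
      · field_simp
    rw [h2]
    simp [hX]
  have hX0 : ∀ i ∈ s₀, 0 ≤ X i := by
    intro i hi
    by_cases h : i = 0
    · simp [hX, h]; linarith
    · simp only [hX, h, if_false]
      exact mul_nonneg (hθ0 i) hratio0
  have hXπ : ∀ i ∈ s₀, X i ≤ π := by
    intro i hi
    by_cases h : i = 0
    · simp [hX, h]; linarith
    · simp only [hX, h, if_false]
      calc θ i * (T / S) ≤ θ i * 1 := mul_le_mul_of_nonneg_left hratio1 (hθ0 i)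
        _ ≤ π := by rw [mul_one]; exact hθπ i
  have hclaim := sum_cos_le n hn s₀ hcard X hX0 hXπ hXsum
  -- ∑ cos θ i - cos T ≤ n cos (π/n)
  have hXle : ∀ i ∈ Icc 1 (n - 1), cos (θ i) ≤ cos (X i) := by
    intro i hi
    obtain ⟨hi1, _⟩ := hmemIcc i hi
    have hne : i ≠ 0 := Nat.one_le_iff_ne_zero.1 hi1
    simp only [hX, hne, if_false]
    apply Real.cos_le_cos_of_nonneg_of_le_pi (mul_nonneg (hθ0 i) hratio0) (hθπ i)
    calc θ i * (T / S) ≤ θ i * 1 := mul_le_mul_of_nonneg_left hratio1 (hθ0 i)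
      _ = θ i := mul_one _
  have hsplit : ∑ i ∈ s₀, cos (X i) = cos (π - T) + ∑ i ∈ Icc 1 (n - 1), cos (X i) := by
    rw [hs₀, Finset.sum_insert h0notin]
    simp [hX]
  have hmain : (∑ i ∈ Icc 1 (n - 1), cos (θ i)) - cos T ≤ n * cos (π / n) := by
    have h1 : ∑ i ∈ Icc 1 (n - 1), cos (θ i) ≤ ∑ i ∈ Icc 1 (n - 1), cos (X i) :=
      Finset.sum_le_sum hXle
    have h2 : cos (π - T) = - cos T := Real.cos_pi_sub T
    rw [hsplit, h2] at hclaim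
    linarith
  -- final arithmetic
  have hsum_eq : ∑ i ∈ Icc 1 (n - 1), (1 + ⟪v i, v (i + 1)⟫) / 2 =
      (((n : ℝ) - 1) + ∑ i ∈ Icc 1 (n - 1), cos (θ i)) / 2 := by
    rw [← Finset.sum_div]
    congr 1
    have hcast : ((n - 1 + 1 - 1 : ℕ) : ℝ) = (n : ℝ) - 1 := by
      have h9 : n - 1 + 1 - 1 = n - 1 := by omega
      rw [h9, Nat.cast_sub (by omega)]
      norm_num
    rw [Finset.sum_congr rfl hcosθ, Finset.sum_add_distrib, Finset.sum_const,
      Nat.card_Icc, nsmul_eq_mul, hcast, mul_one]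
  have hrhs : (n : ℝ) * cos (π / (2 * n)) ^ 2 - 1 = (n : ℝ) / 2 + (n : ℝ) * cos (π / n) / 2 - 1 := by
    have hn0 : (n : ℝ) ≠ 0 := by positivity
    rw [Real.cos_sq]
    have : 2 * (π / (2 * n)) = π / n := by field_simp
    rw [this]
    ring
  rw [hsum_eq, hrhs]
  have hlast : (1 + cos T) / 2 ≤ (1 + ⟪v 1, v n⟫) / 2 := by linarith
  linarith
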